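/- (Mirror descent step inequality) Suppose b_t minimizes, over a convex set K, the function b ↦ ⟨g, b − b_{t−1}⟩ + D_h(b, b_{t−1}), where h is convex and differentiable on K and D_h is its Bregman divergence. Then for every b* ∈ K: ⟨g, b_t − b_{t−1}⟩ + D_h(b_t, b_{t−1}) ≤ ⟨g, b* − b_{t−1}⟩ + D_h(b*, b_{t−1}) − D_h(b*, b_t). -/

import Mathlib

open Finset

/-- Mirror descent step inequality: if `b_t` minimizes `b ↦ ⟨g, b − b_{t−1}⟩ + D_h(b, b_{t−1})`
over the convex set `K`, where `h` is a differentiable convex function with gradient `gh` and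
Bregman divergence `D`, then for every `b* ∈ K` the stated inequality holds. -/
theorem stmt_6 (n : ℕ) (K : Set (EuclideanSpace ℝ (Fin n))) (hK : Convex ℝ K)
    (h : EuclideanSpace ℝ (Fin n) → ℝ)
    (gh : EuclideanSpace ℝ (Fin n) → EuclideanSpace ℝ (Fin n))
    (hgrad : ∀ x, HasGradientAt h (gh x) x)
    (hconv : ConvexOn ℝ K h)
    (D : EuclideanSpace ℝ (Fin n) → EuclideanSpace ℝ (Fin n) → ℝ)
    (hD : ∀ x y, D x y = h x - h y - (inner ℝ (gh y) (x - y) : ℝ))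
    (g bprev bt : EuclideanSpace ℝ (Fin n))
    (hbprev : bprev ∈ K) (hbt : bt ∈ K)
    (hmin : ∀ b ∈ K, (inner ℝ (g) (bt - bprev) : ℝ) + D bt bprev ≤ (inner ℝ (g) (b - bprev) : ℝ) + D b bprev)
    (bstar : EuclideanSpace ℝ (Fin n)) (hbstar : bstar ∈ K) :
    (inner ℝ (g) (bt - bprev) : ℝ) + D bt bprev ≤
      (inner ℝ (g) (bstar - bprev) : ℝ) + D bstar bprev - D bstar bt := by
  set F : EuclideanSpace ℝ (Fin n) → ℝ :=
    fun b => (inner ℝ (g) (b - bprev) : ℝ) + D b bprev with hF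
  -- F has derivative at bt
  have hderiv : HasFDerivAt F
      (innerSL ℝ g + (InnerProductSpace.toDual ℝ _ (gh bt) : _ →L[ℝ] ℝ)
        - innerSL ℝ (gh bprev)) bt := by
    have h1 : HasFDerivAt h (InnerProductSpace.toDual ℝ _ (gh bt) : _ →L[ℝ] ℝ) bt :=
      (hasGradientAt_iff_hasFDerivAt.mp (hgrad bt))
    have h2 : HasFDerivAt (fun b : EuclideanSpace ℝ (Fin n) =>
        (inner ℝ (g) (b - bprev) : ℝ)) (innerSL ℝ g) bt := by
      have := (innerSL ℝ g).hasFDerivAt (x := bt)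
      have heq : (fun b : EuclideanSpace ℝ (Fin n) => (inner ℝ (g) (b - bprev) : ℝ))
          = fun b => innerSL ℝ g b - innerSL ℝ g bprev := by
        funext b; simp [inner_sub_right]
      rw [heq]
      simpa using this.sub_const (innerSL ℝ g bprev)
    have h3 : HasFDerivAt (fun b : EuclideanSpace ℝ (Fin n) =>
        (inner ℝ (gh bprev) (b - bprev) : ℝ)) (innerSL ℝ (gh bprev)) bt := by
      have := (innerSL ℝ (gh bprev)).hasFDerivAt (x := bt)
      have heq : (fun b : EuclideanSpace ℝ (Fin n) => (inner ℝ (gh bprev) (b - bprev) : ℝ))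
          = fun b => innerSL ℝ (gh bprev) b - innerSL ℝ (gh bprev) bprev := by
        funext b; simp [inner_sub_right]
      rw [heq]
      simpa using this.sub_const (innerSL ℝ (gh bprev) bprev)
    have : HasFDerivAt (fun b => (inner ℝ (g) (b - bprev) : ℝ)
        + (h b - h bprev - (inner ℝ (gh bprev) (b - bprev) : ℝ)))
        (innerSL ℝ g + (InnerProductSpace.toDual ℝ _ (gh bt) : _ →L[ℝ] ℝ)
          - innerSL ℝ (gh bprev)) bt := by
      have := (h2.add ((h1.sub_const (h bprev)).sub h3))
      refine this.congr_fderiv ?_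
      ext v
      simp [ContinuousLinearMap.add_apply, ContinuousLinearMap.sub_apply]
      ring
    convert this using 1
    funext b
    simp only [hF, hD]
  have hminF : IsMinOn F K bt := by
    intro b hb
    exact hmin b hb
  have htangent : bstar - bt ∈ posTangentConeAt K bt :=
    sub_mem_posTangentConeAt_of_segment_subset (hK.segment_subset hbt hbstar)
  have hopt : (0 : ℝ) ≤ (innerSL ℝ g + (InnerProductSpace.toDual ℝ _ (gh bt) : _ →L[ℝ] ℝ)
      - innerSL ℝ (gh bprev)) (bstar - bt) :=
    (hminF.localize.hasFDerivWithinAt_nonneg hderiv.hasFDerivWithinAt htangent)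
  have hopt' : (0 : ℝ) ≤ (inner ℝ g (bstar - bt) : ℝ) + (inner ℝ (gh bt) (bstar - bt) : ℝ)
      - (inner ℝ (gh bprev) (bstar - bt) : ℝ) := by
    simpa [ContinuousLinearMap.add_apply, ContinuousLinearMap.sub_apply] using hopt
  rw [hD, hD, hD]
  have e1 : (inner ℝ g (bstar - bt) : ℝ) = inner ℝ g (bstar - bprev) - inner ℝ g (bt - bprev) := by
    rw [← inner_sub_right]; congr 1; abel
  have e2 : (inner ℝ (gh bprev) (bstar - bt) : ℝ)
      = inner ℝ (gh bprev) (bstar - bprev) - inner ℝ (gh bprev) (bt - bprev) := by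
    rw [← inner_sub_right]; congr 1; abel
  linarith [hopt', e1, e2]
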